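/- arXiv:1702.05224 — 3 statements merged into one kernel-verified Lean document; each statement's English description precedes it below -/
import Mathlib

section
/- If P is a permutation matrix, then the penalty function G(P) = (1/3)·tr(Pᵀ(P − P∘P)) equals 0; more generally, for orthogonal P, G(P) ≥ 0 with equality if and only if P is a permutation matrix. -/
open Matrix
open scoped Matrix

/-- A permutation matrix: `P i j = 1` iff `j = σ i`. -/
def IsPermMatrix {n : ℕ} (P : Matrix (Fin n) (Fin n) ℝ) : Prop :=
  ∃ σ : Equiv.Perm (Fin n), ∀ i j, P i j = if σ i = j then 1 else 0

/-- For orthogonal `P`, the penalty `G(P) = (1/3) tr(Pᵀ(P − P∘P))` is nonnegative,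
and it vanishes iff `P` is a permutation matrix. -/
theorem penalty_nonneg_eq_zero_iff_perm {n : ℕ} (P : Matrix (Fin n) (Fin n) ℝ)
    (hP : Pᵀ * P = 1) :
    0 ≤ (1 / 3 : ℝ) * Matrix.trace (Pᵀ * (P - P ⊙ P)) ∧
      ((1 / 3 : ℝ) * Matrix.trace (Pᵀ * (P - P ⊙ P)) = 0 ↔ IsPermMatrix P) := by
  have hcol : ∀ j, ∑ i, P i j ^ 2 = 1 := by
    intro j
    have h := congrFun (congrFun hP j) j
    simpa [Matrix.mul_apply, Matrix.one_apply, sq] using h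
  have horth : ∀ j k, j ≠ k → ∑ i, P i j * P i k = 0 := by
    intro j k hjk
    have h := congrFun (congrFun hP j) k
    simpa [Matrix.mul_apply, Matrix.one_apply, hjk] using h
  have hbd : ∀ i j, P i j ≤ 1 := by
    intro i j
    have h1 : P i j ^ 2 ≤ 1 := by
      rw [← hcol j]
      exact Finset.single_le_sum (fun k _ => sq_nonneg (P k j)) (Finset.mem_univ i)
    nlinarith [sq_nonneg (P i j)]
  have key : Matrix.trace (Pᵀ * (P - P ⊙ P)) = ∑ j, ∑ i, P i j ^ 2 * (1 - P i j) := by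
    simp only [Matrix.trace, Matrix.diag, Matrix.mul_apply, Matrix.sub_apply,
      Matrix.hadamard_apply, Matrix.transpose_apply]
    apply Finset.sum_congr rfl; intro j _
    apply Finset.sum_congr rfl; intro i _
    ring
  have hterm : ∀ j ∈ Finset.univ, ∀ i ∈ (Finset.univ : Finset (Fin n)),
      (0:ℝ) ≤ P i j ^ 2 * (1 - P i j) := fun j _ i _ =>
    mul_nonneg (sq_nonneg _) (by linarith [hbd i j])
  have hnn : (0:ℝ) ≤ ∑ j, ∑ i, P i j ^ 2 * (1 - P i j) :=
    Finset.sum_nonneg fun j hj => Finset.sum_nonneg (hterm j hj)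
  refine ⟨by rw [key]; positivity, ?_⟩
  rw [key]
  constructor
  · intro h0
    have hsum0 : ∑ j, ∑ i, P i j ^ 2 * (1 - P i j) = 0 := by linarith
    have hzero : ∀ i j, P i j = 0 ∨ P i j = 1 := by
      intro i j
      have h1 := (Finset.sum_eq_zero_iff_of_nonneg (fun j hj =>
        Finset.sum_nonneg (hterm j hj))).mp hsum0 j (Finset.mem_univ j)
      have h2 := (Finset.sum_eq_zero_iff_of_nonneg (hterm j (Finset.mem_univ j))).mp h1 i
        (Finset.mem_univ i)
      rcases mul_eq_zero.mp h2 with h | h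
      · left; exact pow_eq_zero_iff (by norm_num) |>.mp h
      · right; linarith
    -- each column has an entry equal to 1
    have hex : ∀ j, ∃ i, P i j = 1 := by
      intro j
      by_contra hc
      push_neg at hc
      have : ∑ i, P i j ^ 2 = 0 := by
        apply Finset.sum_eq_zero
        intro i _
        rcases hzero i j with h | h
        · simp [h]
        · exact absurd h (hc i)
      rw [hcol j] at this; norm_num at this
    choose f hf using hex
    have huniq : ∀ i j, i ≠ f j → P i j = 0 := by
      intro i j hij
      have hs : ∑ k, P k j ^ 2 = 1 := hcol j
      have hsplit : ∑ k ∈ Finset.univ.erase (f j), P k j ^ 2 = 0 := by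
        have hs := Finset.add_sum_erase Finset.univ (fun k => P k j ^ 2) (Finset.mem_univ (f j))
        rw [hf j] at hs
        linarith
      have := (Finset.sum_eq_zero_iff_of_nonneg (fun k _ => sq_nonneg (P k j))).mp hsplit i
        (Finset.mem_erase.mpr ⟨hij, Finset.mem_univ i⟩)
      exact pow_eq_zero_iff (by norm_num) |>.mp this
    have hinj : Function.Injective f := by
      intro j k hjk
      by_contra hne
      have h0 := horth j k hne
      have hall := (Finset.sum_eq_zero_iff_of_nonneg (fun i _ => by
        rcases hzero i j with h | h <;> rcases hzero i k with h' | h' <;>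
          simp [h, h'])).mp h0 (f j) (Finset.mem_univ _)
      rw [hf j, hjk, hf k] at hall
      norm_num at hall
    have hbij : Function.Bijective f := Finite.injective_iff_bijective.mp hinj
    refine ⟨(Equiv.ofBijective f hbij).symm, ?_⟩
    intro i j
    by_cases h : (Equiv.ofBijective f hbij).symm i = j
    · have : f j = i := by
        have := congrArg (Equiv.ofBijective f hbij) h
        simpa [Equiv.ofBijective_apply] using this.symm
      simp [h, this.symm ▸ hf j, ← this, hf j]
    · have hne : i ≠ f j := by
        intro hi
        apply h
        rw [hi]
        simp [Equiv.symm_apply_eq, Equiv.ofBijective_apply]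
      simp [h, huniq i j hne]
  · rintro ⟨σ, hσ⟩
    have : ∑ j, ∑ i, P i j ^ 2 * (1 - P i j) = 0 := by
      apply Finset.sum_eq_zero; intro j _
      apply Finset.sum_eq_zero; intro i _
      rw [hσ i j]
      by_cases h : σ i = j <;> simp [h]
    rw [this, mul_zero]
end

section
/- (Procrustes minimizer form) Let A = V_A Λ_A V_Aᵀ and B = V_B Λ_B V_Bᵀ be symmetric matrices with eigenvalues sorted in the same (decreasing) order in Λ_A and Λ_B, V_A, V_B orthogonal. Then P* = V_B S V_Aᵀ with S = diag(±1,…,±1) is orthogonal and achieves ‖A − P*ᵀ B P*‖_F = ‖Λ_A − Λ_B‖_F, which is at most ‖A − QᵀBQ‖_F for every orthogonal Q. -/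
open Matrix

/-- Frobenius norm. -/
noncomputable def frob {n : ℕ} (M : Matrix (Fin n) (Fin n) ℝ) : ℝ :=
  Real.sqrt (Matrix.trace (Mᵀ * M))

lemma ds_sum_le {n : ℕ} (d : Matrix (Fin n) (Fin n) ℝ) (hd : d ∈ doublyStochastic ℝ (Fin n))
    (a b : Fin n → ℝ) (hab : Monovary a b) :
    ∑ i, ∑ j, d i j * (a i * b j) ≤ ∑ i, a i * b i := by
  obtain ⟨w, hw0, hw1, hw⟩ := exists_eq_sum_perm_of_mem_doublyStochastic hd
  have hd' : ∀ i j, d i j = ∑ σ : Equiv.Perm (Fin n), w σ * (if σ i = j then 1 else 0) := by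
    intro i j
    rw [← hw]
    simp [Matrix.sum_apply, Equiv.Perm.permMatrix, PEquiv.toMatrix_apply,
      Equiv.toPEquiv_apply, eq_comm]
  have key : ∑ i, ∑ j, d i j * (a i * b j)
      = ∑ σ : Equiv.Perm (Fin n), w σ * ∑ i, a i * b (σ i) := by
    have h1 : ∀ i, ∑ j, d i j * (a i * b j)
        = ∑ σ : Equiv.Perm (Fin n), w σ * (a i * b (σ i)) := by
      intro i
      simp_rw [hd', Finset.sum_mul]
      rw [Finset.sum_comm]
      refine Finset.sum_congr rfl fun σ _ => ?_
      simp [mul_ite, Finset.sum_ite_eq, mul_assoc]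
    simp_rw [h1, Finset.mul_sum]
    exact Finset.sum_comm
  rw [key]
  calc ∑ σ : Equiv.Perm (Fin n), w σ * ∑ i, a i * b (σ i)
      ≤ ∑ σ : Equiv.Perm (Fin n), w σ * ∑ i, a i * b i := by
        refine Finset.sum_le_sum fun σ _ => mul_le_mul_of_nonneg_left ?_ (hw0 σ)
        exact hab.sum_mul_comp_perm_le_sum_mul (σ := σ)
    _ = ∑ i, a i * b i := by rw [← Finset.sum_mul, hw1, one_mul]

lemma trace_diag_le {n : ℕ} (a b : Fin n → ℝ) (ha : Antitone a) (hb : Antitone b)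
    (M : Matrix (Fin n) (Fin n) ℝ) (hM : Mᵀ * M = 1) (hM' : M * Mᵀ = 1) :
    Matrix.trace (Matrix.diagonal a * Mᵀ * Matrix.diagonal b * M) ≤ ∑ i, a i * b i := by
  set d : Matrix (Fin n) (Fin n) ℝ := Matrix.of fun i j => (M j i) ^ 2 with hddef
  have hd : d ∈ doublyStochastic ℝ (Fin n) := by
    rw [mem_doublyStochastic_iff_sum]
    refine ⟨fun i j => sq_nonneg _, fun i => ?_, fun j => ?_⟩
    · have := congrArg (fun N => N i i) hM
      simpa [Matrix.mul_apply, sq, hddef] using this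
    · have := congrArg (fun N => N j j) hM'
      simpa [Matrix.mul_apply, sq, hddef] using this
  have htr : Matrix.trace (Matrix.diagonal a * Mᵀ * Matrix.diagonal b * M)
      = ∑ i, ∑ j, d i j * (a i * b j) := by
    simp only [Matrix.trace, Matrix.diag, Matrix.mul_apply, Matrix.diagonal_apply,
      Matrix.transpose_apply, hddef, Matrix.of_apply]
    refine Finset.sum_congr rfl fun i _ => ?_
    simp only [ite_mul, mul_ite, zero_mul, mul_zero, Finset.sum_ite_eq, Finset.sum_ite_eq',
      Finset.mem_univ, if_true]
    refine Finset.sum_congr rfl fun j _ => ?_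
    ring
  rw [htr]
  exact ds_sum_le d hd a b (ha.monovary hb)

lemma mul_cancel_mid {n : ℕ} {P V : Matrix (Fin n) (Fin n) ℝ} (h : P * V = 1)
    (X Y : Matrix (Fin n) (Fin n) ℝ) : (X * P) * (V * Y) = X * Y := by
  rw [Matrix.mul_assoc, ← Matrix.mul_assoc P, h, Matrix.one_mul]

lemma cancel_l {n : ℕ} {P V : Matrix (Fin n) (Fin n) ℝ} (h : P * V = 1)
    (Y : Matrix (Fin n) (Fin n) ℝ) : P * (V * Y) = Y := by
  rw [← Matrix.mul_assoc, h, Matrix.one_mul]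

lemma conj_mul' {n : ℕ} {V : Matrix (Fin n) (Fin n) ℝ} (hV : Vᵀ * V = 1)
    (X Y : Matrix (Fin n) (Fin n) ℝ) :
    (V * X * Vᵀ) * (V * Y * Vᵀ) = V * (X * Y) * Vᵀ := by
  rw [Matrix.mul_assoc V Y Vᵀ, mul_cancel_mid hV (V * X) (Y * Vᵀ),
    ← Matrix.mul_assoc, Matrix.mul_assoc V X Y]

lemma trace_conj {n : ℕ} {V : Matrix (Fin n) (Fin n) ℝ} (hV : Vᵀ * V = 1)
    (M : Matrix (Fin n) (Fin n) ℝ) : Matrix.trace (V * M * Vᵀ) = Matrix.trace M := by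
  rw [Matrix.trace_mul_cycle, hV, Matrix.one_mul]

lemma frob_conj {n : ℕ} {V : Matrix (Fin n) (Fin n) ℝ} (hV : Vᵀ * V = 1)
    (C : Matrix (Fin n) (Fin n) ℝ) : frob (V * C * Vᵀ) = frob C := by
  unfold frob
  congr 1
  have h1 : (V * C * Vᵀ)ᵀ = V * Cᵀ * Vᵀ := by
    simp [Matrix.transpose_mul, Matrix.mul_assoc]
  rw [h1, conj_mul' hV, trace_conj hV]

/-- Procrustes minimizer form: if `A = V_A Λ_A V_Aᵀ`, `B = V_B Λ_B V_Bᵀ` with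
`V_A`, `V_B` orthogonal and eigenvalues sorted decreasingly, then
`P* = V_B S V_Aᵀ` (with `S` a diagonal sign matrix) is orthogonal, achieves
`‖A − P*ᵀ B P*‖_F = ‖Λ_A − Λ_B‖_F`, and this is minimal over all orthogonal `Q`. -/
theorem procrustes_minimizer {n : ℕ} (A B VA VB : Matrix (Fin n) (Fin n) ℝ)
    (a b : Fin n → ℝ) (ha : Antitone a) (hb : Antitone b)
    (hVA : VAᵀ * VA = 1) (hVA' : VA * VAᵀ = 1)
    (hVB : VBᵀ * VB = 1) (hVB' : VB * VBᵀ = 1)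
    (hAsymm : Aᵀ = A) (hBsymm : Bᵀ = B)
    (hAdec : A = VA * Matrix.diagonal a * VAᵀ)
    (hBdec : B = VB * Matrix.diagonal b * VBᵀ)
    (s : Fin n → ℝ) (hs : ∀ i, s i = 1 ∨ s i = -1) :
    let Pstar := VB * Matrix.diagonal s * VAᵀ
    Pstarᵀ * Pstar = 1 ∧
    frob (A - Pstarᵀ * B * Pstar) = frob (Matrix.diagonal a - Matrix.diagonal b) ∧
    ∀ Q : Matrix (Fin n) (Fin n) ℝ, Qᵀ * Q = 1 →
      frob (A - Pstarᵀ * B * Pstar) ≤ frob (A - Qᵀ * B * Q) := by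
  intro Pstar
  have hP : Pstar = VB * Matrix.diagonal s * VAᵀ := rfl
  have hss : ∀ Y : Matrix (Fin n) (Fin n) ℝ,
      Matrix.diagonal s * (Matrix.diagonal s * Y) = Y := by
    intro Y
    rw [← Matrix.mul_assoc, Matrix.diagonal_mul_diagonal]
    have h1 : Matrix.diagonal (fun i => s i * s i) = (1 : Matrix (Fin n) (Fin n) ℝ) := by
      have : (fun i => s i * s i) = fun _ => (1 : ℝ) :=
        funext fun i => by rcases hs i with h | h <;> simp [h]
      rw [this, ← Matrix.diagonal_one]
    rw [h1, Matrix.one_mul]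
  have hsbs : ∀ Y : Matrix (Fin n) (Fin n) ℝ,
      Matrix.diagonal s * (Matrix.diagonal b * (Matrix.diagonal s * Y))
        = Matrix.diagonal b * Y := by
    intro Y
    rw [← Matrix.mul_assoc, ← Matrix.mul_assoc, Matrix.diagonal_mul_diagonal,
      Matrix.diagonal_mul_diagonal]
    have h0 : (fun i => s i * b i * s i) = b := funext fun i => by
      rcases hs i with h | h <;> rw [h] <;> ring
    rw [h0]
  have hPt : Pstarᵀ = VA * Matrix.diagonal s * VBᵀ := by
    rw [hP]
    simp [Matrix.transpose_mul, Matrix.mul_assoc]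
  have hPP : Pstarᵀ * Pstar = 1 := by
    rw [hP, hPt]
    simp only [Matrix.mul_assoc]
    rw [cancel_l hVB, hss, hVA']
  have hPBP : Pstarᵀ * B * Pstar = VA * Matrix.diagonal b * VAᵀ := by
    rw [hP, hPt, hBdec]
    simp only [Matrix.mul_assoc]
    rw [cancel_l hVB, cancel_l hVB, hsbs]
  have hdiff : A - Pstarᵀ * B * Pstar = VA * (Matrix.diagonal a - Matrix.diagonal b) * VAᵀ := by
    rw [hAdec, hPBP, Matrix.mul_sub, Matrix.sub_mul]
  have hfrobP : frob (A - Pstarᵀ * B * Pstar) = frob (Matrix.diagonal a - Matrix.diagonal b) := by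
    rw [hdiff, frob_conj hVA]
  refine ⟨hPP, hfrobP, ?_⟩
  intro Q hQ
  have hQ' : Q * Qᵀ = 1 := mul_eq_one_comm.mp hQ
  rw [hfrobP]
  unfold frob
  apply Real.sqrt_le_sqrt
  -- LHS trace
  have hL : Matrix.trace ((Matrix.diagonal a - Matrix.diagonal b)ᵀ
      * (Matrix.diagonal a - Matrix.diagonal b)) = ∑ i, (a i - b i) * (a i - b i) := by
    rw [Matrix.diagonal_sub, Matrix.diagonal_transpose, Matrix.diagonal_mul_diagonal,
      Matrix.trace_diagonal]
  -- symmetry of X := Qᵀ * B * Q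
  have hXsym : (Qᵀ * B * Q)ᵀ = Qᵀ * B * Q := by
    simp [Matrix.transpose_mul, hBsymm, Matrix.mul_assoc]
  have hCsym : (A - Qᵀ * B * Q)ᵀ = A - Qᵀ * B * Q := by
    rw [Matrix.transpose_sub, hAsymm, hXsym]
  -- trace (A * A)
  have tAA : Matrix.trace (A * A) = ∑ i, a i * a i := by
    rw [hAdec, conj_mul' hVA, trace_conj hVA, Matrix.diagonal_mul_diagonal,
      Matrix.trace_diagonal]
  -- trace (X * X)
  have tXX : Matrix.trace ((Qᵀ * B * Q) * (Qᵀ * B * Q)) = ∑ i, b i * b i := by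
    have e1 := mul_cancel_mid hQ' (Qᵀ * B) (B * Q)
    rw [← Matrix.mul_assoc Qᵀ B Q] at e1
    rw [e1, Matrix.trace_mul_comm, mul_cancel_mid hQ' B B, hBdec, conj_mul' hVB,
      trace_conj hVB, Matrix.diagonal_mul_diagonal, Matrix.trace_diagonal]
  -- trace (A * X) ≤ ∑ a i * b i
  have hM1 : (VBᵀ * (Q * VA))ᵀ * (VBᵀ * (Q * VA)) = 1 := by
    simp only [Matrix.transpose_mul, Matrix.transpose_transpose, Matrix.mul_assoc]
    rw [cancel_l hVB' (Q * VA), cancel_l hQ VA, hVA]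
  have hM2 : (VBᵀ * (Q * VA)) * (VBᵀ * (Q * VA))ᵀ = 1 := by
    simp only [Matrix.transpose_mul, Matrix.transpose_transpose, Matrix.mul_assoc]
    rw [cancel_l hVA' (Qᵀ * VB), cancel_l hQ' VB, hVB]
  have tAX : Matrix.trace (A * (Qᵀ * B * Q)) ≤ ∑ i, a i * b i := by
    have e2 : Matrix.trace (A * (Qᵀ * B * Q))
        = Matrix.trace (Matrix.diagonal a * (VBᵀ * (Q * VA))ᵀ * Matrix.diagonal b
            * (VBᵀ * (Q * VA))) := by
      rw [hAdec, hBdec]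
      simp only [Matrix.transpose_mul, Matrix.transpose_transpose, Matrix.mul_assoc]
      rw [Matrix.trace_mul_comm]
      simp only [Matrix.mul_assoc]
    rw [e2]
    exact trace_diag_le a b ha hb _ hM1 hM2
  -- expand the squared norm
  have expand : Matrix.trace ((A - Qᵀ * B * Q)ᵀ * (A - Qᵀ * B * Q))
      = Matrix.trace (A * A) + Matrix.trace ((Qᵀ * B * Q) * (Qᵀ * B * Q))
        - 2 * Matrix.trace (A * (Qᵀ * B * Q)) := by
    rw [hCsym, Matrix.sub_mul, Matrix.mul_sub, Matrix.mul_sub, Matrix.trace_sub,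
      Matrix.trace_sub, Matrix.trace_sub, Matrix.trace_mul_comm (Qᵀ * B * Q) A]
    ring
  rw [hL, expand, tAA, tXX]
  have hsum : ∑ i, (a i - b i) * (a i - b i)
      = ∑ i, a i * a i + ∑ i, b i * b i - 2 * ∑ i, a i * b i := by
    rw [← Finset.sum_add_distrib, Finset.mul_sum, ← Finset.sum_sub_distrib]
    exact Finset.sum_congr rfl fun i _ => by ring
  rw [hsum]
  linarith [tAX]
end

section
/- For sequences a_1 ≥ … ≥ a_n and b_1 ≤ … ≤ b_n (opposite orderings) and any orthogonal Q, tr(Λ_A Qᵀ Λ_B Q) ≥ Σ_{i=1}^n a_i b_i, with equality at Q = I; i.e., sorting eigenvalues in opposite order minimizes the trace over the orthogonal group. -/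
open Matrix

/-- For oppositely sorted sequences (`a` decreasing, `b` increasing) and any
orthogonal `Q`, `tr(Λ_A Qᵀ Λ_B Q) ≥ Σ aᵢ bᵢ`, with equality at `Q = 1`. -/
theorem procrustes_opposite_order {n : ℕ} (a b : Fin n → ℝ)
    (ha : Antitone a) (hb : Monotone b) :
    (∀ Q : Matrix (Fin n) (Fin n) ℝ, Qᵀ * Q = 1 →
      ∑ i : Fin n, a i * b i ≤
        Matrix.trace (Matrix.diagonal a * Qᵀ * Matrix.diagonal b * Q)) ∧
    Matrix.trace (Matrix.diagonal a * (1 : Matrix (Fin n) (Fin n) ℝ)ᵀ *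
        Matrix.diagonal b * 1) = ∑ i : Fin n, a i * b i := by
  have hab : Antivary a b := by
    intro i j hij
    exact ha (le_of_not_gt fun h : j < i => absurd (hb h.le) (not_le.2 hij))
  constructor
  · intro Q hQ
    have htr : Matrix.trace (Matrix.diagonal a * Qᵀ * Matrix.diagonal b * Q)
        = ∑ i : Fin n, ∑ j : Fin n, (Q j i)^2 * (a i * b j) := by
      simp only [Matrix.trace, Matrix.diag, Matrix.mul_apply, Matrix.diagonal_apply,
        Matrix.transpose_apply, ite_mul, zero_mul, Finset.sum_ite_eq, Finset.mem_univ, if_true,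
        Finset.sum_mul]
      congr 1; ext i; congr 1; ext j
      simp [Finset.sum_mul, Finset.sum_ite_eq, Finset.sum_ite_eq']
      ring
    rw [htr]
    set D : Matrix (Fin n) (Fin n) ℝ := Matrix.of fun i j => (Q j i)^2 with hD
    have hQQ : Q * Qᵀ = 1 := by rwa [mul_eq_one_comm] at hQ
    have hDmem : D ∈ doublyStochastic ℝ (Fin n) := by
      rw [mem_doublyStochastic_iff_sum]
      refine ⟨fun i j => sq_nonneg _, fun i => ?_, fun j => ?_⟩
      · have := congrArg (fun M => M i i) hQ
        simpa [hD, Matrix.mul_apply, Matrix.one_apply, sq] using this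
      · have := congrArg (fun M => M j j) hQQ
        simpa [hD, Matrix.mul_apply, Matrix.one_apply, sq] using this
    obtain ⟨w, hw0, hw1, hwD⟩ := exists_eq_sum_perm_of_mem_doublyStochastic hDmem
    have key : ∀ i j, D i j = ∑ σ : Equiv.Perm (Fin n), w σ * (σ.permMatrix ℝ) i j := by
      intro i j
      rw [← hwD]; simp [Matrix.sum_apply]
    calc ∑ i : Fin n, a i * b i = ∑ σ : Equiv.Perm (Fin n), w σ * ∑ i : Fin n, a i * b i := by
          rw [← Finset.sum_mul, hw1, one_mul]
      _ ≤ ∑ σ : Equiv.Perm (Fin n), w σ * ∑ i : Fin n, a i * b (σ i) := by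
          refine Finset.sum_le_sum fun σ _ => mul_le_mul_of_nonneg_left ?_ (hw0 σ)
          simpa [smul_eq_mul] using hab.sum_smul_le_sum_smul_comp_perm (σ := σ)
      _ = ∑ i : Fin n, ∑ σ : Equiv.Perm (Fin n), ∑ j : Fin n,
            w σ * (σ.permMatrix ℝ) i j * (a i * b j) := by
          rw [Finset.sum_comm]
          refine Finset.sum_congr rfl fun σ _ => ?_
          rw [Finset.mul_sum]
          refine Finset.sum_congr rfl fun i _ => ?_
          simp [Equiv.Perm.permMatrix, PEquiv.toMatrix_apply, Equiv.toPEquiv_apply,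
            mul_ite, ite_mul, mul_zero, zero_mul, mul_one]
      _ = ∑ i : Fin n, ∑ j : Fin n, D i j * (a i * b j) := by
          refine Finset.sum_congr rfl fun i _ => ?_
          rw [Finset.sum_comm]
          refine Finset.sum_congr rfl fun j _ => ?_
          rw [key, Finset.sum_mul]
      _ = ∑ i : Fin n, ∑ j : Fin n, (Q j i)^2 * (a i * b j) := rfl
  · simp [Matrix.diagonal_mul_diagonal, Matrix.trace_diagonal]
end
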